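/- Let ρ1, ρ2 be states on ℂ^{dA} ⊗ ℂ^{dB} that are invariant under partial transpose, Γ(ρ1) = ρ1 and Γ(ρ2) = ρ2. Suppose S1, S1', S2, S2' are positive semidefinite matrices with (S1 + Γ(S1')) + (S2 + Γ(S2')) = 1 (identity) and Tr(ρ1·(S2 + Γ(S2'))) = Tr(ρ2·(S1 + Γ(S1'))) = 0. Then T1 := (S1 + S1')/2 and T2 := (S2 + S2')/2 are positive semidefinite, satisfy (T1 + Γ(T1)) + (T2 + Γ(T2)) = 1, and Tr(ρ1 T2) = Tr(ρ2 T1) = 0. -/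

import Mathlib

open Matrix ComplexOrder

noncomputable section

abbrev Mat (dA dB : ℕ) := Matrix (Fin dA × Fin dB) (Fin dA × Fin dB) ℂ

/-- Partial transpose on the second factor. -/
def ptB {dA dB : ℕ} (X : Mat dA dB) : Mat dA dB :=
  Matrix.of fun p q => X (p.1, q.2) (q.1, p.2)

lemma ptB_add {dA dB : ℕ} (X Y : Mat dA dB) : ptB (X + Y) = ptB X + ptB Y := rfl

lemma ptB_smul {dA dB : ℕ} (c : ℂ) (X : Mat dA dB) : ptB (c • X) = c • ptB X := rfl

lemma psd_half_add {dA dB : ℕ} {A B : Mat dA dB} (hA : A.PosSemidef) (hB : B.PosSemidef) :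
    ((1/2 : ℂ) • (A + B)).PosSemidef := by
  have h := hA.add hB
  rw [posSemidef_iff_dotProduct_mulVec]
  constructor
  · have := h.1
    unfold Matrix.IsHermitian at this ⊢
    rw [conjTranspose_smul, this]
    norm_num
  · intro x
    have := h.dotProduct_mulVec_nonneg x
    rw [smul_mulVec, dotProduct_smul]
    refine mul_nonneg ?_ this
    rw [Complex.le_def]
    norm_num

lemma trace_nonneg_of_psd {n : Type*} [Fintype n] [DecidableEq n] {M : Matrix n n ℂ}
    (hM : M.PosSemidef) : 0 ≤ M.trace := by
  rw [Matrix.trace]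
  apply Finset.sum_nonneg
  intro i _
  have := hM.dotProduct_mulVec_nonneg (Pi.single i 1)
  simpa [dotProduct, Pi.single_apply, Matrix.mulVec] using this

lemma trace_mul_psd_nonneg {n : Type*} [Fintype n] [DecidableEq n] {A B : Matrix n n ℂ}
    (hA : A.PosSemidef) (hB : B.PosSemidef) : 0 ≤ (A * B).trace := by
  open scoped MatrixOrder in
  obtain ⟨C, rfl⟩ := CStarAlgebra.nonneg_iff_eq_star_mul_self.mp hA.nonneg
  rw [star_eq_conjTranspose]
  rw [Matrix.mul_assoc, Matrix.trace_mul_comm]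
  exact trace_nonneg_of_psd (hB.mul_mul_conjTranspose_same C)

lemma trace_mul_ptB {dA dB : ℕ} (X Y : Mat dA dB) :
    (X * ptB Y).trace = (ptB X * Y).trace := by
  simp only [Matrix.trace, Matrix.diag, Matrix.mul_apply, ptB, Matrix.of_apply]
  rw [← Finset.sum_product', ← Finset.sum_product']
  exact Finset.sum_nbij' (fun z => ((z.1.1, z.2.2), (z.2.1, z.1.2)))
    (fun z => ((z.1.1, z.2.2), (z.2.1, z.1.2)))
    (fun _ _ => Finset.mem_univ _) (fun _ _ => Finset.mem_univ _)
    (fun _ _ => rfl) (fun _ _ => rfl) (fun _ _ => rfl)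

lemma ptB_ptB {dA dB : ℕ} (X : Mat dA dB) : ptB (ptB X) = X := rfl

lemma ptB_one {dA dB : ℕ} : ptB (1 : Mat dA dB) = 1 := by
  ext ⟨a, b⟩ ⟨c, d⟩
  simp only [ptB, Matrix.of_apply, Matrix.one_apply, Prod.mk.injEq, Prod.ext_iff]
  by_cases h1 : a = c <;> by_cases h2 : b = d <;> simp [h1, h2, eq_comm]

/-- Symmetrization of a perfectly discriminating SEP measurement for partial-transpose
invariant states. -/
theorem symmetrized_measurement (dA dB : ℕ) (hdA : 0 < dA) (hdB : 0 < dB)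
    (ρ1 ρ2 S1 S1' S2 S2' : Mat dA dB)
    (hρ1 : ρ1.PosSemidef) (hρ1tr : ρ1.trace = 1)
    (hρ2 : ρ2.PosSemidef) (hρ2tr : ρ2.trace = 1)
    (hΓ1 : ptB ρ1 = ρ1) (hΓ2 : ptB ρ2 = ρ2)
    (hS1 : S1.PosSemidef) (hS1' : S1'.PosSemidef)
    (hS2 : S2.PosSemidef) (hS2' : S2'.PosSemidef)
    (hsum : (S1 + ptB S1') + (S2 + ptB S2') = 1)
    (h1 : (ρ1 * (S2 + ptB S2')).trace = 0)
    (h2 : (ρ2 * (S1 + ptB S1')).trace = 0) :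
    ((1/2 : ℂ) • (S1 + S1')).PosSemidef ∧ ((1/2 : ℂ) • (S2 + S2')).PosSemidef ∧
    (((1/2 : ℂ) • (S1 + S1') + ptB ((1/2 : ℂ) • (S1 + S1'))) +
      ((1/2 : ℂ) • (S2 + S2') + ptB ((1/2 : ℂ) • (S2 + S2')))) = 1 ∧
    (ρ1 * ((1/2 : ℂ) • (S2 + S2'))).trace = 0 ∧
    (ρ2 * ((1/2 : ℂ) • (S1 + S1'))).trace = 0 := by
  have hΓsum : (ptB S1 + S1') + (ptB S2 + S2') = 1 := by
    have h := congrArg ptB hsum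
    rwa [ptB_add, ptB_add, ptB_add, ptB_ptB, ptB_ptB, ptB_one] at h
  -- trace decomposition for ρ1
  have e1 : (ρ1 * (S2 + ptB S2')).trace = (ρ1 * S2).trace + (ρ1 * S2').trace := by
    rw [mul_add, Matrix.trace_add, trace_mul_ptB, hΓ1]
  have e2 : (ρ2 * (S1 + ptB S1')).trace = (ρ2 * S1).trace + (ρ2 * S1').trace := by
    rw [mul_add, Matrix.trace_add, trace_mul_ptB, hΓ2]
  have zsum : ∀ x y : ℂ, 0 ≤ x → 0 ≤ y → x + y = 0 → x = 0 ∧ y = 0 := by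
    intro x y hx hy hxy
    constructor
    · exact le_antisymm (by calc x ≤ x + y := le_add_of_nonneg_right hy
                              _ = 0 := hxy) hx
    · exact le_antisymm (by calc y ≤ x + y := le_add_of_nonneg_left hx
                              _ = 0 := hxy) hy
  obtain ⟨z1a, z1b⟩ := zsum _ _ (trace_mul_psd_nonneg hρ1 hS2) (trace_mul_psd_nonneg hρ1 hS2')
    (e1 ▸ h1)
  obtain ⟨z2a, z2b⟩ := zsum _ _ (trace_mul_psd_nonneg hρ2 hS1) (trace_mul_psd_nonneg hρ2 hS1')
    (e2 ▸ h2)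
  refine ⟨psd_half_add hS1 hS1', psd_half_add hS2 hS2', ?_, ?_, ?_⟩
  · calc ((1/2 : ℂ) • (S1 + S1') + ptB ((1/2 : ℂ) • (S1 + S1'))) +
        ((1/2 : ℂ) • (S2 + S2') + ptB ((1/2 : ℂ) • (S2 + S2')))
        = (1/2 : ℂ) • (((S1 + ptB S1') + (S2 + ptB S2')) +
            ((ptB S1 + S1') + (ptB S2 + S2'))) := by
          simp only [ptB_smul, ptB_add, smul_add]; abel
      _ = 1 := by
          rw [hsum, hΓsum, ← two_smul ℂ (1 : Mat dA dB), smul_smul]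
          norm_num
  · rw [mul_smul_comm, Matrix.trace_smul, mul_add, Matrix.trace_add, z1a, z1b]
    simp
  · rw [mul_smul_comm, Matrix.trace_smul, mul_add, Matrix.trace_add, z2a, z2b]
    simp
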